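/- Let X be a normal variety, K ⊆ WDiv(X) a finitely generated subgroup mapping onto Cl(X), L ⊆ K a subgroup of finite index. If the Veronese subalgebra A = ⊕_{D ∈ L} Γ(X, O_X(D)) is a finitely generated ℂ-algebra, then so is R = ⊕_{D ∈ K} Γ(X, O_X(D)). -/

import Mathlib

open AddMonoidAlgebra Submodule

set_option maxHeartbeats 1000000
set_option synthInstance.maxHeartbeats 400000
set_option linter.unusedVariables false


/-- Let `X` be a normal variety with function field `F`, Weil divisor group `WDiv`,
spaces of sections `Γ D = Γ(X, O_X(D)) ⊆ F`, and class map `cl : WDiv → Cl(X)`.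
Let `K ⊆ WDiv(X)` be a finitely generated subgroup mapping onto `Cl(X)` and
`L ⊆ K` a subgroup of finite index.  If the Veronese subalgebra
`A = ⊕_{D ∈ L} Γ(X, O_X(D))` is finitely generated over `ℂ`, then so is
`R = ⊕_{D ∈ K} Γ(X, O_X(D))`. -/
theorem stmt_15
    (F : Type*) [Field F] [Algebra ℂ F]
    (WDiv : Type*) [AddCommGroup WDiv]
    (Γ : WDiv → Submodule ℂ F)
    (one_mem : (1 : F) ∈ Γ 0)
    (mul_mem : ∀ {D E : WDiv} {a b : F}, a ∈ Γ D → b ∈ Γ E → a * b ∈ Γ (D + E))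
    (Cl : Type*) [AddCommGroup Cl] (cl : WDiv →+ Cl)
    (Kgrp : AddSubgroup WDiv) (hKfg : Kgrp.FG)
    (honto : ∀ c : Cl, ∃ D ∈ Kgrp, cl D = c)
    (Lgrp : AddSubgroup WDiv) (hLK : Lgrp ≤ Kgrp)
    (hindex : (Lgrp.addSubgroupOf Kgrp).index ≠ 0)
    (hA : (Algebra.adjoin ℂ {x : AddMonoidAlgebra F WDiv |
        ∃ D ∈ Lgrp, ∃ a ∈ Γ D, x = AddMonoidAlgebra.single D a}).FG) :
    (Algebra.adjoin ℂ {x : AddMonoidAlgebra F WDiv |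
        ∃ D ∈ Kgrp, ∃ a ∈ Γ D, x = AddMonoidAlgebra.single D a}).FG := by
  classical
  set SK : Set (AddMonoidAlgebra F WDiv) :=
    {x : AddMonoidAlgebra F WDiv |
        ∃ D ∈ Kgrp, ∃ a ∈ Γ D, x = AddMonoidAlgebra.single D a} with hSKdef
  set SL : Set (AddMonoidAlgebra F WDiv) :=
    {x : AddMonoidAlgebra F WDiv |
        ∃ D ∈ Lgrp, ∃ a ∈ Γ D, x = AddMonoidAlgebra.single D a} with hSLdef
  set A : Subalgebra ℂ (AddMonoidAlgebra F WDiv) := Algebra.adjoin ℂ SL with hAdef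
  set R : Subalgebra ℂ (AddMonoidAlgebra F WDiv) := Algebra.adjoin ℂ SK with hRdef
  -- powers of sections
  have pow_mem : ∀ (k : ℕ) (D : WDiv) (a : F), a ∈ Γ D → a ^ k ∈ Γ (k • D) := by
    intro k D a ha
    induction k with
    | zero => simpa using one_mem
    | succ n ih =>
      rw [pow_succ, succ_nsmul]
      exact mul_mem ih ha
  have hSLK : SL ⊆ SK := by
    rintro x ⟨D, hD, a, ha, rfl⟩
    exact ⟨D, hLK hD, a, ha, rfl⟩
  have hAR : A ≤ R := Algebra.adjoin_mono hSLK
  -- SK is closed under multiplication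
  have hSKmul : ∀ x ∈ SK, ∀ y ∈ SK, x * y ∈ SK := by
    rintro x ⟨D, hD, a, ha, rfl⟩ y ⟨E, hE, b, hb, rfl⟩
    exact ⟨D + E, add_mem hD hE, a * b, mul_mem ha hb,
      AddMonoidAlgebra.single_mul_single _ _ _ _⟩
  -- A is Noetherian
  haveI hFT : Algebra.FiniteType ℂ ↥A := (Subalgebra.fg_iff_finiteType A).mp hA
  haveI hNoe : IsNoetherianRing ↥A := Algebra.FiniteType.isNoetherianRing ℂ ↥A
  -- the finite quotient
  set L' : AddSubgroup ↥Kgrp := Lgrp.addSubgroupOf Kgrp with hL'def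
  set Q := ↥Kgrp ⧸ L' with hQdef
  have hcard : Nat.card Q ≠ 0 := by
    rw [← AddSubgroup.index_eq_card]; exact hindex
  haveI hQfin : Finite Q := (Nat.card_ne_zero.mp hcard).2
  set n : ℕ := Nat.card Q with hndef
  -- graded pieces as A-submodules
  set gens : Q → Set (AddMonoidAlgebra F WDiv) := fun g =>
    {x | ∃ d : ↥Kgrp, (QuotientAddGroup.mk d : Q) = g ∧
      ∃ a ∈ Γ (d : WDiv), x = AddMonoidAlgebra.single (d : WDiv) a} with hgensdef
  set W : Q → Submodule ↥A (AddMonoidAlgebra F WDiv) := fun g =>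
    Submodule.span ↥A (gens g) with hWdef
  -- membership of A-algebra elements in A (as a set)
  have hmemA : ∀ x ∈ SL, x ∈ A := fun x hx => Algebra.subset_adjoin hx
  -- Each W g is a finitely generated A-module
  have hWfg : ∀ g : Q, (W g).FG := by
    intro g
    by_cases hg : ∃ d : ↥Kgrp, (QuotientAddGroup.mk d : Q) = g ∧
        ∃ a ∈ Γ (d : WDiv), a ≠ 0
    · obtain ⟨d, hdg, a, ha, hane⟩ := hg
      -- the multiplier u
      set u : AddMonoidAlgebra F WDiv :=
        AddMonoidAlgebra.single ((n - 1) • (d : WDiv)) (a ^ (n - 1)) with hudef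
      have hun : u = (AddMonoidAlgebra.single (d : WDiv) a) ^ (n - 1) :=
        (AddMonoidAlgebra.single_pow _ _ _).symm
      -- u is invertible
      have huinv : AddMonoidAlgebra.single (-((n - 1) • (d : WDiv))) ((a ^ (n - 1))⁻¹) * u
          = 1 := by
        rw [hudef, AddMonoidAlgebra.single_mul_single, neg_add_cancel,
          inv_mul_cancel₀ (pow_ne_zero _ hane), AddMonoidAlgebra.one_def]
      -- multiplication by u as an A-linear map
      set μ : AddMonoidAlgebra F WDiv →ₗ[↥A] AddMonoidAlgebra F WDiv :=
        LinearMap.mulLeft ↥A u with hμdef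
      have hμinj : Function.Injective μ := by
        intro x y hxy
        have : AddMonoidAlgebra.single (-((n - 1) • (d : WDiv))) ((a ^ (n - 1))⁻¹) * (u * x)
            = AddMonoidAlgebra.single (-((n - 1) • (d : WDiv))) ((a ^ (n - 1))⁻¹) * (u * y) := by
          simpa [hμdef, LinearMap.mulLeft_apply] using congrArg _ hxy
        rwa [← mul_assoc, ← mul_assoc, huinv, one_mul, one_mul] at this
      -- image of W g under μ lands in (1 : Submodule A _)
      have hmap_le : (W g).map μ ≤ (1 : Submodule ↥A (AddMonoidAlgebra F WDiv)) := by
        rw [hWdef, Submodule.map_span, Submodule.span_le]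
        rintro _ ⟨x, ⟨d', hd'g, a', ha', rfl⟩, rfl⟩
        have hdeg : ((n - 1) • d + d' : ↥Kgrp) ∈ L' := by
          have : (QuotientAddGroup.mk ((n - 1) • d + d') : Q) = 0 := by
            have h1 : (QuotientAddGroup.mk ((n - 1) • d + d') : Q)
                = (n - 1) • (QuotientAddGroup.mk d : Q) + (QuotientAddGroup.mk d' : Q) := by
              simp
            rw [h1, hdg, hd'g, ← succ_nsmul, Nat.sub_add_cancel (Nat.one_le_iff_ne_zero.mpr hcard)]
            exact card_nsmul_eq_zero'
          exact (QuotientAddGroup.eq_zero_iff _).mp this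
        have hdegL : ((n - 1) • (d : WDiv) + (d' : WDiv)) ∈ Lgrp := by
          have := (AddSubgroup.mem_addSubgroupOf).mp hdeg
          simpa using this
        have hprod : u * AddMonoidAlgebra.single (d' : WDiv) a' ∈ SL := by
          rw [hudef, AddMonoidAlgebra.single_mul_single]
          exact ⟨_, hdegL, _, mul_mem (pow_mem (n - 1) _ _ ha) ha', rfl⟩
        have hmem : u * AddMonoidAlgebra.single (d' : WDiv) a' ∈ A := hmemA _ hprod
        rw [SetLike.mem_coe, Submodule.mem_one]
        exact ⟨⟨u * AddMonoidAlgebra.single (d' : WDiv) a', hmem⟩, rfl⟩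
      have h1fg : (1 : Submodule ↥A (AddMonoidAlgebra F WDiv)).FG :=
        ⟨{1}, by rw [Finset.coe_singleton]; exact Submodule.one_eq_span.symm⟩
      have hmapfg : ((W g).map μ).FG := by
        obtain ⟨hN⟩ := isNoetherian_of_fg_of_noetherian _ h1fg
        have hle := hmap_le
        have : (((W g).map μ).comap (1 : Submodule ↥A (AddMonoidAlgebra F WDiv)).subtype).FG :=
          hN _
        have := this.map (1 : Submodule ↥A (AddMonoidAlgebra F WDiv)).subtype
        rwa [Submodule.map_comap_eq_self (by rwa [Submodule.range_subtype])] at this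
      exact Submodule.fg_of_fg_map_injective μ hμinj hmapfg
    · -- all coefficients are zero, so W g = ⊥
      have : W g ≤ ⊥ := by
        rw [hWdef, Submodule.span_le]
        rintro x ⟨d, hdg, a, ha, rfl⟩
        have : a = 0 := by
          by_contra hne
          exact hg ⟨d, hdg, a, ha, hne⟩
        simp [this]
      exact ⟨∅, le_antisymm (by simp) (by simpa using this)⟩
  -- choose finite generating sets for each W g
  haveI : Fintype Q := Fintype.ofFinite Q
  choose T hT using hWfg
  set t : Finset (AddMonoidAlgebra F WDiv) :=
    insert 1 (Finset.univ.biUnion fun g : Q => T g) with htdef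
  -- R is contained in the ℂ-span of 1 and SK
  have hRspan : ∀ x ∈ R, x ∈ Submodule.span ℂ (insert 1 SK) := by
    intro x hx
    have h1 : Subalgebra.toSubmodule R = Submodule.span ℂ (Submonoid.closure SK : Set _) :=
      Algebra.adjoin_eq_span ℂ SK
    have h2 : (Submonoid.closure SK : Set (AddMonoidAlgebra F WDiv)) ⊆ insert 1 SK := by
      intro y hy
      induction hy using Submonoid.closure_induction with
      | mem z hz => exact Set.mem_insert_of_mem _ hz
      | one => exact Set.mem_insert _ _
      | mul z w hz hw hz' hw' =>
        rcases hz' with rfl | hz'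
        · rw [one_mul]; exact hw'
        rcases hw' with rfl | hw'
        · rw [mul_one]; exact Set.mem_insert_of_mem _ hz'
        · exact Set.mem_insert_of_mem _ (hSKmul _ hz' _ hw')
    have : x ∈ Submodule.span ℂ (Submonoid.closure SK : Set _) := by
      rw [← h1]; exact hx
    exact Submodule.span_mono h2 this
  -- elements of SK lie in the A-span of t
  have hSKt : ∀ x ∈ SK, x ∈ Submodule.span ↥A (t : Set (AddMonoidAlgebra F WDiv)) := by
    rintro x ⟨D, hD, a, ha, rfl⟩
    set g : Q := QuotientAddGroup.mk (⟨D, hD⟩ : ↥Kgrp) with hgdef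
    have hxW : AddMonoidAlgebra.single D a ∈ W g :=
      Submodule.subset_span ⟨⟨D, hD⟩, rfl, a, ha, rfl⟩
    rw [← hT g] at hxW
    refine Submodule.span_mono ?_ hxW
    intro y hy
    simp only [htdef, Finset.coe_insert, Finset.coe_biUnion, Finset.coe_univ, Set.mem_univ,
      Set.iUnion_true]
    exact Set.mem_insert_of_mem _ (Set.mem_iUnion.mpr ⟨g, hy⟩)
  -- hence R ⊆ A-span of t
  have hRt : ∀ x ∈ R, x ∈ Submodule.span ↥A (t : Set (AddMonoidAlgebra F WDiv)) := by
    intro x hx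
    have hx' := hRspan x hx
    have hsub : insert 1 SK ⊆
        (Submodule.span ↥A (t : Set (AddMonoidAlgebra F WDiv)) :
          Set (AddMonoidAlgebra F WDiv)) := by
      rintro y (rfl | hy)
      · exact Submodule.subset_span (by simp [htdef])
      · exact hSKt y hy
    have : Submodule.span ℂ (insert 1 SK) ≤
        (Submodule.span ↥A (t : Set (AddMonoidAlgebra F WDiv))).restrictScalars ℂ :=
      Submodule.span_le.mpr hsub
    exact this hx'
  -- spans over A inside subalgebras containing A
  have hspan_le : ∀ (X : Set (AddMonoidAlgebra F WDiv)) (B : Subalgebra ℂ (AddMonoidAlgebra F WDiv)),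
      A ≤ B → X ⊆ B → ∀ x ∈ Submodule.span ↥A X, x ∈ B := by
    intro X B hAB hXB x hx
    induction hx using Submodule.span_induction with
    | mem z hz => exact hXB hz
    | zero => exact B.zero_mem
    | add _ _ _ _ h1 h2 => exact B.add_mem h1 h2
    | smul a z _ h =>
      have haz : a • z = (a : AddMonoidAlgebra F WDiv) * z := by
        rw [Subalgebra.smul_def, smul_eq_mul]
      rw [haz]
      exact B.mul_mem (hAB a.2) h
  -- choose generators of A
  obtain ⟨s, hs⟩ := hA
  -- final generating set
  refine ⟨s ∪ t, le_antisymm ?_ ?_⟩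
  · -- adjoin (s ∪ t) ≤ R
    rw [Algebra.adjoin_le_iff]
    intro y hy
    rcases Finset.mem_union.mp (by simpa using hy) with h | h
    · exact hAR (hs ▸ Algebra.subset_adjoin h)
    · -- t ⊆ R
      rcases Finset.mem_insert.mp h with rfl | h
      · exact R.one_mem
      · obtain ⟨g, -, hgy⟩ := Finset.mem_biUnion.mp h
        have hyW : y ∈ W g := by
          rw [← hT g]; exact Submodule.subset_span (by exact_mod_cast hgy)
        rw [hWdef] at hyW
        refine hspan_le (gens g) R hAR ?_ y hyW
        rintro z ⟨d, hdg, a, ha, rfl⟩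
        exact Algebra.subset_adjoin ⟨(d : WDiv), d.2, a, ha, rfl⟩
  · -- R ≤ adjoin (s ∪ t)
    set B : Subalgebra ℂ (AddMonoidAlgebra F WDiv) :=
      Algebra.adjoin ℂ (↑(s ∪ t) : Set (AddMonoidAlgebra F WDiv)) with hBdef
    have hAB : A ≤ B := by
      rw [← hs, hBdef]
      refine Algebra.adjoin_mono ?_
      intro z hz
      exact Finset.mem_coe.mpr (Finset.mem_union.mpr (Or.inl (Finset.mem_coe.mp hz)))
    have htB : (t : Set (AddMonoidAlgebra F WDiv)) ⊆ B := by
      intro z hz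
      exact Algebra.subset_adjoin
        (Finset.mem_coe.mpr (Finset.mem_union.mpr (Or.inr (Finset.mem_coe.mp hz))))
    intro x hx
    exact hspan_le (t : Set (AddMonoidAlgebra F WDiv)) B hAB htB x (hRt x hx)
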